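/- Let X be a compact geodesic metric space with basepoint x₀, let μ be a Borel measure on X with 0 < μ(X) < ∞, and let s > 0 be a real number such that (i) every loop in X of length strictly less than s is null-homotopic rel its basepoint, and (ii) μ(closedBall(x,r)) ≥ 2r² for every x ∈ X and every real r with 0 < r ≤ s/2. Then for all real numbers α, β > 0 with 4α + β < 1/2 and every real T > 0, the set of elements of the fundamental group π₁(X, x₀) that admit a representative loop based at x₀ of length at most T is finite, and its cardinality is at most (μ(X)/(2α²s²))^⌊T/(βs)⌋, where ⌊·⌋ denotes the integer part. -/

import Mathlib

open Metric MeasureTheory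

attribute [local instance] Path.Homotopic.setoid

/-- The length of a continuous path in a metric space: its total variation. -/
noncomputable def pathLength {X : Type*} [PseudoEMetricSpace X] {x y : X} (γ : Path x y) :
    ENNReal :=
  eVariationOn γ Set.univ

/-- A metric space is geodesic if any two points are joined by a path of length
equal to the distance between them. -/
def IsGeodesicSpace (X : Type*) [MetricSpace X] : Prop :=
  ∀ x y : X, ∃ γ : Path x y, pathLength γ = ENNReal.ofReal (dist x y)

/-- An element of the fundamental group, constructed from a homotopy class of loops. -/
noncomputable def FundamentalGroup.fromLoop {X : Type*} [TopologicalSpace X] {x : X}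
    (p : Path.Homotopic.Quotient x x) : FundamentalGroup X x :=
  FundamentalGroup.fromPath (X := TopCat.of X) p


open Set unitInterval CategoryTheory
open scoped ENNReal NNReal

namespace ECE

lemma Icc_zero_one_eq_univ : Set.Icc (0 : I) 1 = Set.univ := by
  ext t
  simp only [Set.mem_Icc, Set.mem_univ, iff_true]
  exact ⟨Subtype.coe_le_coe.mp (by simpa using t.2.1), Subtype.coe_le_coe.mp (by simpa using t.2.2)⟩

variable {X : Type*} [PseudoEMetricSpace X]

lemma pathLength_cast {x y x' y' : X} (p : Path x y) (hx : x' = x) (hy : y' = y) :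
    pathLength (p.cast hx hy) = pathLength p := rfl

lemma pathLength_symm_le {x y : X} (p : Path x y) : pathLength p.symm ≤ pathLength p := by
  have h : ⇑p.symm = ⇑p ∘ unitInterval.symm := funext fun t => Path.symm_apply p t
  have : pathLength p.symm = eVariationOn (⇑p ∘ unitInterval.symm) Set.univ := by
    unfold pathLength; rw [h]
  rw [this]
  refine eVariationOn.comp_le_of_antitoneOn _ _ (fun a _ b _ hab => ?_) (Set.mapsTo_univ _ _)
  exact Subtype.coe_le_coe.mp (by simp only [unitInterval.coe_symm_eq]; linarith [Subtype.coe_le_coe.mpr hab])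

/-- midpoint of I -/
noncomputable def half : I := ⟨1/2, by norm_num⟩

lemma pathLength_trans_le {x y z : X} (p : Path x y) (q : Path y z) :
    pathLength (p.trans q) ≤ pathLength p + pathLength q := by
  have h0h : (0 : I) ≤ half := Subtype.coe_le_coe.mp (by norm_num [half])
  have hh1 : half ≤ (1 : I) := Subtype.coe_le_coe.mp (by norm_num [half])
  have hsplit : eVariationOn (⇑(p.trans q)) (Set.Icc 0 half)
      + eVariationOn (⇑(p.trans q)) (Set.Icc half 1)
      = eVariationOn (⇑(p.trans q)) (Set.Icc 0 1) := by
    have := eVariationOn.Icc_add_Icc (⇑(p.trans q)) (s := Set.univ) h0h hh1 (Set.mem_univ half)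
    simpa [Set.univ_inter] using this
  have hL : pathLength (p.trans q) = eVariationOn (⇑(p.trans q)) (Set.Icc 0 half)
      + eVariationOn (⇑(p.trans q)) (Set.Icc half 1) := by
    unfold pathLength
    rw [hsplit, Icc_zero_one_eq_univ]
  rw [hL]
  gcongr
  · -- left half
    set φ : I → I := fun t => ⟨min (2 * t) 1, by
      constructor
      · exact le_min (mul_nonneg (by norm_num) t.2.1) zero_le_one
      · exact min_le_right _ _⟩ with hφ
    have heq : Set.EqOn (⇑(p.trans q)) (⇑p ∘ φ) (Set.Icc 0 half) := by
      intro t ht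
      have ht' : (t : ℝ) ≤ 1/2 := Subtype.coe_le_coe.mpr ht.2
      have h2t : 2 * (t : ℝ) ≤ 1 := by linarith
      simp only [Function.comp_apply, Path.trans_apply, dif_pos ht', hφ]
      congr 1
      exact Subtype.ext (by simp [min_eq_left h2t])
    rw [eVariationOn.eq_of_eqOn heq]
    refine eVariationOn.comp_le_of_monotoneOn _ _ (fun a _ b _ hab => ?_) (Set.mapsTo_univ _ _)
    exact Subtype.coe_le_coe.mp (by
      simp only [hφ]
      exact min_le_min (by linarith [Subtype.coe_le_coe.mpr hab]) le_rfl)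
  · -- right half
    set ψ : I → I := fun t => ⟨max (2 * t - 1) 0, by
      constructor
      · exact le_max_right _ _
      · exact max_le (by linarith [t.2.2]) zero_le_one⟩ with hψ
    have heq : Set.EqOn (⇑(p.trans q)) (⇑q ∘ ψ) (Set.Icc half 1) := by
      intro t ht
      have ht' : (1:ℝ)/2 ≤ (t : ℝ) := Subtype.coe_le_coe.mpr ht.1
      rcases lt_or_eq_of_le ht' with h | h
      · have h2t : ¬ ((t:ℝ) ≤ 1/2) := by linarith
        simp only [Function.comp_apply, Path.trans_apply, dif_neg h2t, hψ]
        congr 1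
        exact Subtype.ext (by simp [max_eq_left]; linarith)
      · have h2t : (t:ℝ) ≤ 1/2 := le_of_eq h.symm
        have hR : (⇑q ∘ ψ) t = y := by
          simp only [Function.comp_apply]
          rw [show ψ t = 0 from Subtype.ext (by simp [hψ]; linarith)]
          exact q.source
        rw [hR, Path.trans_apply, dif_pos h2t,
          show (⟨2 * (t:ℝ), by constructor <;> linarith [t.2.1]⟩ : I) = 1 from
            Subtype.ext (by simp; linarith)]
        exact p.target
    rw [eVariationOn.eq_of_eqOn heq]
    refine eVariationOn.comp_le_of_monotoneOn _ _ (fun a _ b _ hab => ?_) (Set.mapsTo_univ _ _)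
    exact Subtype.coe_le_coe.mp (by
      simp only [hψ]
      exact max_le_max (by linarith [Subtype.coe_le_coe.mpr hab]) le_rfl)

/-- affine reparametrisation point. -/
def affineI (a b u : I) : I := ⟨a + u * (b - a), by
  constructor
  · nlinarith [a.2.1, a.2.2, b.2.1, b.2.2, u.2.1, u.2.2]
  · nlinarith [a.2.1, a.2.2, b.2.1, b.2.2, u.2.1, u.2.2]⟩

lemma continuous_affineI (a b : I) : Continuous (affineI a b) := by
  apply Continuous.subtype_mk
  continuity

/-- The restriction of a path to a subinterval, as a path. -/
def subPath {X' : Type*} [TopologicalSpace X'] {x y : X'} (γ : Path x y) (a b : I) :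
    Path (γ a) (γ b) where
  toFun := fun u => γ (affineI a b u)
  continuous_toFun := γ.continuous.comp (continuous_affineI a b)
  source' := congrArg γ (Subtype.ext (by simp [affineI]))
  target' := congrArg γ (Subtype.ext (by simp [affineI]))

lemma monotone_affineI {a b : I} (hab : a ≤ b) : Monotone (affineI a b) := by
  intro u v huv
  have hab' : (a:ℝ) ≤ b := Subtype.coe_le_coe.mpr hab
  refine Subtype.coe_le_coe.mp ?_
  simp only [affineI]
  have := Subtype.coe_le_coe.mpr huv
  nlinarith

lemma affineI_mapsTo {a b : I} (hab : a ≤ b) : Set.MapsTo (affineI a b) Set.univ (Set.Icc a b) := by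
  intro u _
  have hab' : (a:ℝ) ≤ b := Subtype.coe_le_coe.mpr hab
  constructor
  · refine Subtype.coe_le_coe.mp ?_
    simp only [affineI]
    nlinarith [u.2.1]
  · refine Subtype.coe_le_coe.mp ?_
    simp only [affineI]
    nlinarith [u.2.2]

lemma subPath_length_le {X' : Type*} [PseudoEMetricSpace X'] {x y : X'} (γ : Path x y)
    {a b : I} (hab : a ≤ b) :
    pathLength (subPath γ a b) ≤ eVariationOn (⇑γ) (Set.Icc a b) := by
  have : pathLength (subPath γ a b) = eVariationOn (⇑γ ∘ affineI a b) Set.univ := rfl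
  rw [this]
  exact eVariationOn.comp_le_of_monotoneOn _ _ ((monotone_affineI hab).monotoneOn _)
    (affineI_mapsTo hab)

section TopX
variable {Y : Type*} [TopologicalSpace Y]

lemma cast_rfl_rfl {x y : Y} (p : Path x y) : p.cast rfl rfl = p := by
  ext u; rfl

lemma trans_cast_left {x y z x' : Y} (p : Path x y) (q : Path y z) (h : x' = x) :
    (p.trans q).cast h rfl = (p.cast h rfl).trans q := by
  ext u; rfl

lemma trans_cast_right {x y z z' : Y} (p : Path x y) (q : Path y z) (h : z' = z) :
    (p.trans q).cast rfl h = p.trans (q.cast rfl h) := by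
  ext u; rfl

lemma homotopic_cast {x y x' y' : Y} {p q : Path x y} (h : p.Homotopic q)
    (hx : x' = x) (hy : y' = y) : (p.cast hx hy).Homotopic (q.cast hx hy) := by
  subst hx; subst hy
  rwa [cast_rfl_rfl, cast_rfl_rfl]

/-- From the nullhomotopy of `p.trans q.symm` deduce that `p` and `q` are homotopic. -/
lemma homotopic_of_trans_symm {a b : Y} (p q : Path a b)
    (h : (p.trans q.symm).Homotopic (Path.refl a)) : p.Homotopic q := by
  apply Quotient.exact (s := Path.Homotopic.setoid a b)
  let A : FundamentalGroupoid Y := ⟨a⟩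
  let B : FundamentalGroupoid Y := ⟨b⟩
  have e1 : (⟦p⟧ ≫ ⟦q.symm⟧ : A ⟶ A) = 𝟙 A := by
    exact Quotient.sound h
  have e2 : (⟦q.symm⟧ ≫ ⟦q⟧ : B ⟶ B) = 𝟙 B := by
    exact Quotient.sound ⟨(Path.Homotopy.reflSymmTrans q).symm⟩
  calc (show A ⟶ B from ⟦p⟧) = ⟦p⟧ ≫ 𝟙 B := (CategoryTheory.Category.comp_id (X := A) (Y := B) _).symm
    _ = ⟦p⟧ ≫ (⟦q.symm⟧ ≫ ⟦q⟧) := by rw [e2]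
    _ = (⟦p⟧ ≫ ⟦q.symm⟧) ≫ ⟦q⟧ := (CategoryTheory.Category.assoc (W := A) _ _ _).symm
    _ = 𝟙 A ≫ ⟦q⟧ := by rw [e1]
    _ = (show A ⟶ B from ⟦q⟧) := CategoryTheory.Category.id_comp (X := A) _

/-- Splitting a subpath at an intermediate time, up to homotopy. -/
lemma subPath_trans_homotopic {x y : Y} (γ : Path x y) {a b c : I} (hab : a ≤ b) (hbc : b ≤ c) :
    ((subPath γ a b).trans (subPath γ b c)).Homotopic (subPath γ a c) := by
  have hab' : (a:ℝ) ≤ b := Subtype.coe_le_coe.mpr hab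
  have hbc' : (b:ℝ) ≤ c := Subtype.coe_le_coe.mpr hbc
  rcases eq_or_lt_of_le (hab'.trans hbc') with hac | hac
  · -- degenerate: a = b = c, all paths are constant
    have hb : (b:ℝ) = a := le_antisymm (hac ▸ hbc') hab'
    have heq : (subPath γ a b).trans (subPath γ b c) = subPath γ a c := by
      ext u
      rw [Path.trans_apply]
      split_ifs with h
      · show γ _ = γ _
        exact congrArg γ (Subtype.ext (by simp only [affineI]; nlinarith))
      · show γ _ = γ _
        exact congrArg γ (Subtype.ext (by simp only [affineI]; nlinarith))
    rw [heq]
  · -- a < c : use a reparametrisation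
    have hca : (0:ℝ) < c - a := by linarith
    have memf : ∀ u : I, (min (2 * (u:ℝ)) 1 * ((b:ℝ) - a) + max (2 * (u:ℝ) - 1) 0 * ((c:ℝ) - b)) / ((c:ℝ) - a) ∈ I := by
      intro u
      have h1 : min (2 * (u:ℝ)) 1 ≤ 1 := min_le_right _ _
      have h1' : (0:ℝ) ≤ min (2 * (u:ℝ)) 1 := le_min (mul_nonneg (by norm_num) u.2.1) zero_le_one
      have h2 : max (2 * (u:ℝ) - 1) 0 ≤ 1 := max_le (by linarith [u.2.2]) zero_le_one
      have h2' : (0:ℝ) ≤ max (2 * (u:ℝ) - 1) 0 := le_max_right _ _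
      constructor
      · apply div_nonneg _ hca.le
        nlinarith
      · rw [div_le_one hca]
        nlinarith
    set f : I → I := fun u => ⟨_, memf u⟩ with hf
    have hfc : Continuous f := by
      apply Continuous.subtype_mk
      have : Continuous fun u : I => (u : ℝ) := continuous_subtype_val
      fun_prop
    have hf0 : f 0 = 0 := by
      apply Subtype.ext
      show (min (2 * ((0:I):ℝ)) 1 * ((b:ℝ) - a) + max (2 * ((0:I):ℝ) - 1) 0 * ((c:ℝ) - b)) / ((c:ℝ) - a) = ((0:I):ℝ)
      norm_num
    have hf1 : f 1 = 1 := by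
      apply Subtype.ext
      show (min (2 * ((1:I):ℝ)) 1 * ((b:ℝ) - a) + max (2 * ((1:I):ℝ) - 1) 0 * ((c:ℝ) - b)) / ((c:ℝ) - a) = ((1:I):ℝ)
      rw [Set.Icc.coe_one]
      rw [div_eq_one_iff_eq hca.ne']
      norm_num
    have heq : (subPath γ a c).reparam f hfc hf0 hf1 = (subPath γ a b).trans (subPath γ b c) := by
      ext u
      rw [Path.trans_apply]
      split_ifs with h
      · show γ _ = γ _
        refine congrArg γ (Subtype.ext ?_)
        show (a:ℝ) + (f u : ℝ) * ((c:ℝ) - a) = (a:ℝ) + (2*(u:ℝ)) * ((b:ℝ) - a)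
        have hmin : min (2 * (u:ℝ)) 1 = 2 * (u:ℝ) := min_eq_left (by linarith)
        have hmax : max (2 * (u:ℝ) - 1) 0 = 0 := max_eq_right (by linarith)
        have : (f u : ℝ) = (min (2 * (u:ℝ)) 1 * ((b:ℝ) - a) + max (2 * (u:ℝ) - 1) 0 * ((c:ℝ) - b)) / ((c:ℝ) - a) := rfl
        rw [this, hmin, hmax]
        field_simp
        ring
      · show γ _ = γ _
        refine congrArg γ (Subtype.ext ?_)
        show (a:ℝ) + (f u : ℝ) * ((c:ℝ) - a) = (b:ℝ) + (2*(u:ℝ) - 1) * ((c:ℝ) - b)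
        push_neg at h
        have hmin : min (2 * (u:ℝ)) 1 = 1 := min_eq_right (by linarith)
        have hmax : max (2 * (u:ℝ) - 1) 0 = 2 * (u:ℝ) - 1 := max_eq_left (by linarith)
        have : (f u : ℝ) = (min (2 * (u:ℝ)) 1 * ((b:ℝ) - a) + max (2 * (u:ℝ) - 1) 0 * ((c:ℝ) - b)) / ((c:ℝ) - a) := rfl
        rw [this, hmin, hmax]
        field_simp
        ring
    have H := Path.Homotopy.reparam (subPath γ a c) f hfc hf0 hf1
    rw [heq] at H
    exact (Path.Homotopic.refl _).trans ⟨H⟩ |>.symm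

end TopX

section Subdivide

variable {M : Type*} [MetricSpace M]

lemma exists_right_small (γ : I → M) (hγ : Continuous γ) (hfin : eVariationOn γ Set.univ ≠ ⊤)
    {b : I} (hb : b < 1) {ε : ℝ≥0∞} (hε : 0 < ε) (hεfin : ε ≠ ⊤) :
    ∃ c : I, b < c ∧ eVariationOn γ (Set.Icc b c) ≤ ε := by
  set A := eVariationOn γ (Set.Icc b 1) with hA
  have hAfin : A ≠ ⊤ := fun h =>
    hfin (top_le_iff.mp (h ▸ eVariationOn.mono γ (Set.subset_univ _)))
  by_cases hAε : A ≤ ε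
  · exact ⟨1, hb, hAε⟩
  push_neg at hAε
  have hA0 : A ≠ 0 := fun h => (not_lt.mpr zero_le) (h ▸ hAε)
  have hε2 : (0:ℝ≥0∞) < ε/2 := ENNReal.div_pos hε.ne' (by norm_num)
  have hε4 : (0:ℝ≥0∞) < ε/4 := ENNReal.div_pos hε.ne' (by norm_num)
  have hsub : A - ε/2 < A := ENNReal.sub_lt_self hAfin hA0 hε2.ne'
  have hsup : A - ε/2 < ⨆ p : ℕ × { u : ℕ → I // Monotone u ∧ ∀ i, u i ∈ Set.Icc b 1 },
      ∑ i ∈ Finset.range p.1, edist (γ (p.2.1 (i + 1))) (γ (p.2.1 i)) := by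
    rw [hA, eVariationOn] at hsub
    exact hsub
  obtain ⟨⟨k, u, hu, us⟩, hsum⟩ := lt_iSup_iff.mp hsup
  -- continuity of γ at b
  have hcont : ∀ᶠ t in nhds b, edist (γ t) (γ b) < ε/4 :=
    EMetric.tendsto_nhds.mp (hγ.continuousAt (x := b)) _ hε4
  obtain ⟨δ, hδ, hball⟩ := Metric.eventually_nhds_iff_ball.mp hcont
  have hbmem : ((b:ℝ) + δ/2) ⊓ 1 ∈ I := by
    constructor
    · exact le_min (by linarith [b.2.1]) zero_le_one
    · exact min_le_right _ _
  set c₀ : I := ⟨((b:ℝ) + δ/2) ⊓ 1, hbmem⟩ with hc₀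
  have hbc₀ : b < c₀ := by
    rw [← Subtype.coe_lt_coe]
    exact lt_min (by linarith) (Subtype.coe_lt_coe.mpr hb)
  have hP : ∀ t : I, b ≤ t → t ≤ c₀ → edist (γ t) (γ b) < ε/4 := by
    intro t h1 h2
    apply hball
    rw [Metric.mem_ball, Subtype.dist_eq, Real.dist_eq, abs_of_nonneg
      (by linarith [Subtype.coe_le_coe.mpr h1])]
    have := Subtype.coe_le_coe.mpr h2
    have : (t:ℝ) ≤ (b:ℝ) + δ/2 := le_trans this (min_le_left _ _)
    linarith
  by_cases hJ : ∃ i, i ≤ k ∧ b < u i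
  swap
  · -- all partition points are b ; sum is zero, contradiction
    push_neg at hJ
    have hzero : ∀ i ∈ Finset.range k, edist (γ (u (i+1))) (γ (u i)) = 0 := by
      intro i hi
      rw [Finset.mem_range] at hi
      have h1 : u i = b := le_antisymm (hJ i hi.le) (us i).1
      have h2 : u (i+1) = b := le_antisymm (hJ (i+1) hi) (us (i+1)).1
      rw [h1, h2, edist_self]
    rw [Finset.sum_eq_zero hzero] at hsum
    exact absurd hsum (not_lt.mpr zero_le)
  · set J := {i | i ≤ k ∧ b < u i} with hJdef
    have hJne : J.Nonempty := hJ
    set i₀ := sInf J with hi₀def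
    have hi₀ : i₀ ∈ J := Nat.sInf_mem hJne
    set z := u i₀ with hz
    have hbz : b < z := hi₀.2
    set c : I := c₀ ⊓ z with hc
    have hbc : b < c := lt_min hbc₀ hbz
    set w : ℕ → I := fun i => u i ⊔ c with hwdef
    have hwmono : Monotone w := fun i j hij => sup_le_sup (hu hij) le_rfl
    have hws : ∀ i, w i ∈ Set.Icc c 1 := fun i => ⟨le_sup_right, sup_le (us i).2 le_one'⟩
    have hterm : ∀ i ∈ Finset.range k,
        edist (γ (u (i+1))) (γ (u i)) ≤
          edist (γ (w (i+1))) (γ (w i)) + (if i + 1 = i₀ then ε/4 else 0) := by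
      intro i hi
      rw [Finset.mem_range] at hi
      rcases lt_trichotomy (i+1) i₀ with hlt | heq | hgt
      · have h1 : u i = b := by
          have : i ∉ J := Nat.notMem_of_lt_sInf (lt_of_le_of_lt (Nat.le_succ i) hlt)
          simp only [hJdef, Set.mem_setOf_eq, not_and, not_lt] at this
          exact le_antisymm (this hi.le) (us i).1
        have h2 : u (i+1) = b := by
          have : (i+1) ∉ J := Nat.notMem_of_lt_sInf hlt
          simp only [hJdef, Set.mem_setOf_eq, not_and, not_lt] at this
          exact le_antisymm (this hi) (us (i+1)).1
        rw [h1, h2, edist_self]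
        exact zero_le
      · have h1 : u i = b := by
          have : i ∉ J := Nat.notMem_of_lt_sInf (show i < sInf J by omega)
          simp only [hJdef, Set.mem_setOf_eq, not_and, not_lt] at this
          exact le_antisymm (this hi.le) (us i).1
        have hw1 : w i = c := by
          rw [hwdef]; simp only [h1]
          exact sup_eq_right.mpr hbc.le
        have hw2 : w (i+1) = u (i+1) := by
          rw [hwdef]
          apply sup_eq_left.mpr
          rw [heq]
          exact le_trans inf_le_right le_rfl
        rw [h1, hw1, hw2, if_pos heq]
        calc edist (γ (u (i+1))) (γ b) ≤ edist (γ (u (i+1))) (γ c) + edist (γ c) (γ b) :=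
              edist_triangle _ _ _
          _ ≤ edist (γ (u (i+1))) (γ c) + ε/4 := by
              gcongr
              exact (hP c hbc.le (le_trans inf_le_left le_rfl)).le
      · have hle : i₀ ≤ i := Nat.lt_succ_iff.mp hgt
        have hci : c ≤ u i := le_trans inf_le_right (hu hle)
        have hw1 : w i = u i := sup_eq_left.mpr hci
        have hw2 : w (i+1) = u (i+1) := sup_eq_left.mpr (le_trans hci (hu (Nat.le_succ i)))
        rw [hw1, hw2, if_neg (by omega), add_zero]
    have hsum2 : (∑ i ∈ Finset.range k, edist (γ (u (i+1))) (γ (u i))) ≤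
        (∑ i ∈ Finset.range k, edist (γ (w (i+1))) (γ (w i))) + ε/4 := by
      calc (∑ i ∈ Finset.range k, edist (γ (u (i+1))) (γ (u i)))
          ≤ ∑ i ∈ Finset.range k,
            (edist (γ (w (i+1))) (γ (w i)) + (if i + 1 = i₀ then ε/4 else 0)) :=
            Finset.sum_le_sum hterm
        _ = (∑ i ∈ Finset.range k, edist (γ (w (i+1))) (γ (w i)))
            + ∑ i ∈ Finset.range k, (if i + 1 = i₀ then ε/4 else 0) := Finset.sum_add_distrib
        _ ≤ _ := by
            gcongr
            rw [← Finset.sum_filter]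
            have hcard : ((Finset.range k).filter (fun i => i + 1 = i₀)).card ≤ 1 := by
              apply Finset.card_le_one.mpr
              intro a ha b hb
              rw [Finset.mem_filter] at ha hb
              omega
            calc ∑ _i ∈ (Finset.range k).filter (fun i => i + 1 = i₀), ε/4
                = ((Finset.range k).filter (fun i => i + 1 = i₀)).card • (ε/4) :=
                  Finset.sum_const _
              _ ≤ 1 • (ε/4) := smul_le_smul_of_nonneg_right (by exact_mod_cast hcard) zero_le
              _ = ε/4 := one_smul _ _
    have hB : (∑ i ∈ Finset.range k, edist (γ (w (i+1))) (γ (w i))) ≤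
        eVariationOn γ (Set.Icc c 1) := eVariationOn.sum_le (f := γ) (n := k) hwmono hws
    set B := eVariationOn γ (Set.Icc c 1) with hBdef
    have hAB : A - ε/2 < B + ε/4 := lt_of_lt_of_le hsum (hsum2.trans (by gcongr))
    -- split A
    have hsplit : eVariationOn γ (Set.Icc b c) + B = A := by
      have := eVariationOn.Icc_add_Icc γ (s := Set.univ) hbc.le
        (Subtype.coe_le_coe.mp (by simpa using c.2.2) : c ≤ 1) (Set.mem_univ c)
      simpa [Set.univ_inter] using this
    have hBfin : B ≠ ⊤ := by
      intro h
      rw [h, add_top] at hsplit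
      exact hAfin hsplit.symm
    refine ⟨c, hbc, ?_⟩
    have hVeq : eVariationOn γ (Set.Icc b c) = A - B := ENNReal.eq_sub_of_add_eq hBfin hsplit
    rw [hVeq, tsub_le_iff_right]
    have h2 : B + ε/4 + ε/2 ≤ ε + B := by
      have hhalf : ε/4 + ε/2 ≤ ε := by
        have h24 : ε/4 ≤ ε/2 := ENNReal.div_le_div_left (by norm_num : (2:ℝ≥0∞) ≤ 4) ε
        calc ε/4 + ε/2 ≤ ε/2 + ε/2 := add_le_add_left h24 _
          _ = ε := ENNReal.add_halves ε
      calc B + ε/4 + ε/2 = B + (ε/4 + ε/2) := add_assoc _ _ _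
        _ ≤ B + ε := by gcongr
        _ = ε + B := add_comm _ _
    calc A ≤ (A - ε/2) + ε/2 := le_tsub_add
      _ ≤ (B + ε/4) + ε/2 := add_le_add_left hAB.le _
      _ ≤ ε + B := h2

lemma symm_image_Icc (p q : I) (hpq : p ≤ q) :
    unitInterval.symm '' Set.Icc p q = Set.Icc (unitInterval.symm q) (unitInterval.symm p) := by
  ext z
  constructor
  · rintro ⟨w, hw, rfl⟩
    exact ⟨Subtype.coe_le_coe.mp (by
        simp only [unitInterval.coe_symm_eq]
        linarith [Subtype.coe_le_coe.mpr hw.2]),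
      Subtype.coe_le_coe.mp (by
        simp only [unitInterval.coe_symm_eq]
        linarith [Subtype.coe_le_coe.mpr hw.1])⟩
  · intro hz
    refine ⟨unitInterval.symm z, ⟨?_, ?_⟩, unitInterval.symm_symm z⟩
    · exact Subtype.coe_le_coe.mp (by
        simp only [unitInterval.coe_symm_eq]
        linarith [Subtype.coe_le_coe.mpr hz.2, (unitInterval.coe_symm_eq p) ▸
          Subtype.coe_le_coe.mpr hz.2])
    · exact Subtype.coe_le_coe.mp (by
        simp only [unitInterval.coe_symm_eq]
        linarith [Subtype.coe_le_coe.mpr hz.1, (unitInterval.coe_symm_eq q) ▸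
          Subtype.coe_le_coe.mpr hz.1])

lemma antitone_symmI : Antitone unitInterval.symm := by
  intro a b hab
  exact Subtype.coe_le_coe.mp (by
    simp only [unitInterval.coe_symm_eq]
    linarith [Subtype.coe_le_coe.mpr hab])

lemma exists_left_small (γ : I → M) (hγ : Continuous γ) (hfin : eVariationOn γ Set.univ ≠ ⊤)
    {b : I} (hb : 0 < b) {ε : ℝ≥0∞} (hε : 0 < ε) (hεfin : ε ≠ ⊤) :
    ∃ c : I, c < b ∧ eVariationOn γ (Set.Icc c b) ≤ ε := by
  set γ' : I → M := γ ∘ unitInterval.symm with hγ'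
  have hγ'c : Continuous γ' := hγ.comp unitInterval.continuous_symm
  have hkey : ∀ p q : I, p ≤ q →
      eVariationOn γ' (Set.Icc p q) = eVariationOn γ (Set.Icc (unitInterval.symm q) (unitInterval.symm p)) := by
    intro p q hpq
    rw [hγ', eVariationOn.comp_eq_of_antitoneOn γ unitInterval.symm
      (antitone_symmI.antitoneOn _), symm_image_Icc p q hpq]
  have hfin' : eVariationOn γ' Set.univ ≠ ⊤ := by
    rw [hγ', eVariationOn.comp_eq_of_antitoneOn γ unitInterval.symm
      (antitone_symmI.antitoneOn _)]
    rwa [Set.image_univ, (unitInterval.symm_involutive).surjective.range_eq]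
  have hb0 : (0:ℝ) < (b:ℝ) := by
    have := Subtype.coe_lt_coe.mpr hb
    simpa using this
  have hb' : unitInterval.symm b < 1 := by
    rw [← Subtype.coe_lt_coe]
    simp only [unitInterval.coe_symm_eq, Set.Icc.coe_one]
    linarith
  obtain ⟨c', hc', hvar⟩ := exists_right_small γ' hγ'c hfin' hb' hε hεfin
  refine ⟨unitInterval.symm c', ?_, ?_⟩
  · have := antitone_symmI hc'.le
    rcases eq_or_lt_of_le this with h | h
    · exfalso
      have hcb : c' = unitInterval.symm b := by
        have := congrArg unitInterval.symm h
        rwa [unitInterval.symm_symm, unitInterval.symm_symm] at this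
      rw [hcb] at hc'
      exact lt_irrefl _ hc'
    · rwa [unitInterval.symm_symm] at h
  · have heq := hkey (unitInterval.symm b) c' hc'.le
    rw [unitInterval.symm_symm] at heq
    exact heq ▸ hvar

lemma variation_fun_continuous (γ : I → M) (hγ : Continuous γ)
    (hfin : eVariationOn γ Set.univ ≠ ⊤) :
    Continuous fun b : I => (eVariationOn γ (Set.Icc 0 b)).toReal := by
  have hfinIcc : ∀ p q : I, eVariationOn γ (Set.Icc p q) ≠ ⊤ := fun p q h =>
    hfin (top_le_iff.mp (h ▸ eVariationOn.mono γ (Set.subset_univ _)))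
  rw [continuous_iff_continuousAt]
  intro b
  rw [Metric.continuousAt_iff]
  intro ε hε
  have hε2 : (0:ℝ≥0∞) < ENNReal.ofReal (ε/2) := ENNReal.ofReal_pos.mpr (by linarith)
  have hεfin : (ENNReal.ofReal (ε/2)) ≠ ⊤ := ENNReal.ofReal_ne_top
  -- right bound
  have H2 : ∃ δ₂ > 0, ∀ t : I, b ≤ t → (t:ℝ) < (b:ℝ) + δ₂ →
      eVariationOn γ (Set.Icc b t) ≤ ENNReal.ofReal (ε/2) := by
    by_cases hb1 : b < 1
    · obtain ⟨c₂, hc₂, h₂⟩ := exists_right_small γ hγ hfin hb1 hε2 hεfin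
      refine ⟨(c₂:ℝ) - b, by simp [Subtype.coe_lt_coe.mpr hc₂], fun t h1 h2 => ?_⟩
      have ht : t ≤ c₂ := Subtype.coe_le_coe.mp (by linarith)
      exact le_trans (eVariationOn.mono γ (Set.Icc_subset_Icc le_rfl ht)) h₂
    · have hb1' : b = 1 := le_antisymm (Subtype.coe_le_coe.mp (by simpa using b.2.2)) (not_lt.mp hb1)
      refine ⟨1, one_pos, fun t h1 _h2 => ?_⟩
      have ht : t = b := le_antisymm (hb1' ▸ (Subtype.coe_le_coe.mp (by simpa using t.2.2))) h1
      rw [ht]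
      have : (Set.Icc b b).Subsingleton := by
        rw [Set.Icc_self]
        exact Set.subsingleton_singleton
      rw [eVariationOn.subsingleton γ this]
      exact zero_le
  -- left bound
  have H1 : ∃ δ₁ > 0, ∀ t : I, t ≤ b → (b:ℝ) - δ₁ < (t:ℝ) →
      eVariationOn γ (Set.Icc t b) ≤ ENNReal.ofReal (ε/2) := by
    by_cases hb0 : 0 < b
    · obtain ⟨c₁, hc₁, h₁⟩ := exists_left_small γ hγ hfin hb0 hε2 hεfin
      refine ⟨(b:ℝ) - c₁, by simp [Subtype.coe_lt_coe.mpr hc₁], fun t h1 h2 => ?_⟩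
      have ht : c₁ ≤ t := Subtype.coe_le_coe.mp (by linarith)
      exact le_trans (eVariationOn.mono γ (Set.Icc_subset_Icc ht le_rfl)) h₁
    · have hb0' : b = 0 := le_antisymm (not_lt.mp hb0) (Subtype.coe_le_coe.mp (by simpa using b.2.1))
      refine ⟨1, one_pos, fun t h1 _h2 => ?_⟩
      have ht : t = b := le_antisymm h1 (hb0' ▸ (Subtype.coe_le_coe.mp (by simpa using t.2.1)))
      rw [ht]
      have : (Set.Icc b b).Subsingleton := by
        rw [Set.Icc_self]
        exact Set.subsingleton_singleton
      rw [eVariationOn.subsingleton γ this]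
      exact zero_le
  obtain ⟨δ₁, hδ₁, hH1⟩ := H1
  obtain ⟨δ₂, hδ₂, hH2⟩ := H2
  refine ⟨min δ₁ δ₂, lt_min hδ₁ hδ₂, fun t ht => ?_⟩
  rw [Subtype.dist_eq, Real.dist_eq] at ht
  have habs := abs_lt.mp ht
  rcases le_total b t with hbt | htb
  · -- b ≤ t
    have hadd : eVariationOn γ (Set.Icc 0 b) + eVariationOn γ (Set.Icc b t) =
        eVariationOn γ (Set.Icc 0 t) := by
      have := eVariationOn.Icc_add_Icc γ (s := Set.univ)
        (Subtype.coe_le_coe.mp (by simpa using b.2.1) : (0:I) ≤ b) hbt (Set.mem_univ b)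
      simpa [Set.univ_inter] using this
    have hvar : eVariationOn γ (Set.Icc b t) ≤ ENNReal.ofReal (ε/2) :=
      hH2 t hbt (by cases habs; linarith [min_le_right δ₁ δ₂])
    rw [Real.dist_eq]
    have htr : (eVariationOn γ (Set.Icc 0 t)).toReal =
        (eVariationOn γ (Set.Icc 0 b)).toReal + (eVariationOn γ (Set.Icc b t)).toReal := by
      rw [← hadd, ENNReal.toReal_add (hfinIcc _ _) (hfinIcc _ _)]
    rw [htr]
    have h1 : (eVariationOn γ (Set.Icc b t)).toReal ≤ ε/2 :=
      ENNReal.toReal_le_of_le_ofReal (by linarith) hvar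
    have h2 : (0:ℝ) ≤ (eVariationOn γ (Set.Icc b t)).toReal := ENNReal.toReal_nonneg
    rw [abs_lt]
    constructor <;> linarith
  · -- t ≤ b
    have hadd : eVariationOn γ (Set.Icc 0 t) + eVariationOn γ (Set.Icc t b) =
        eVariationOn γ (Set.Icc 0 b) := by
      have := eVariationOn.Icc_add_Icc γ (s := Set.univ)
        (Subtype.coe_le_coe.mp (by simpa using t.2.1) : (0:I) ≤ t) htb (Set.mem_univ t)
      simpa [Set.univ_inter] using this
    have hvar : eVariationOn γ (Set.Icc t b) ≤ ENNReal.ofReal (ε/2) :=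
      hH1 t htb (by cases habs; linarith [min_le_left δ₁ δ₂])
    rw [Real.dist_eq]
    have htr : (eVariationOn γ (Set.Icc 0 b)).toReal =
        (eVariationOn γ (Set.Icc 0 t)).toReal + (eVariationOn γ (Set.Icc t b)).toReal := by
      rw [← hadd, ENNReal.toReal_add (hfinIcc _ _) (hfinIcc _ _)]
    rw [htr]
    have h1 : (eVariationOn γ (Set.Icc t b)).toReal ≤ ε/2 :=
      ENNReal.toReal_le_of_le_ofReal (by linarith) hvar
    have h2 : (0:ℝ) ≤ (eVariationOn γ (Set.Icc t b)).toReal := ENNReal.toReal_nonneg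
    rw [abs_lt]
    constructor <;> linarith

lemma I_zero_le (t : I) : (0:I) ≤ t := Subtype.coe_le_coe.mp (by simpa using t.2.1)
lemma I_le_one (t : I) : t ≤ 1 := Subtype.coe_le_coe.mp (by simpa using t.2.2)

/-- Subdivision of the interval into `n` pieces on each of which `γ` has variation at most `δ`. -/
lemma exists_subdivision (γ : I → M) (hγ : Continuous γ) (hfin : eVariationOn γ Set.univ ≠ ⊤)
    (n : ℕ) (hn : 0 < n) (δ : ℝ) (hδ : (eVariationOn γ Set.univ).toReal ≤ n * δ) :
    ∃ t : ℕ → I, Monotone t ∧ t 0 = 0 ∧ t n = 1 ∧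
      ∀ i < n, eVariationOn γ (Set.Icc (t i) (t (i+1))) ≤ ENNReal.ofReal δ := by
  have hfinIcc : ∀ p q : I, eVariationOn γ (Set.Icc p q) ≠ ⊤ := fun p q h =>
    hfin (top_le_iff.mp (h ▸ eVariationOn.mono γ (Set.subset_univ _)))
  set w : I → ℝ := fun b => (eVariationOn γ (Set.Icc 0 b)).toReal with hwdef
  have hwcont : Continuous w := variation_fun_continuous γ hγ hfin
  set L : ℝ := (eVariationOn γ Set.univ).toReal with hL
  have hL0 : 0 ≤ L := ENNReal.toReal_nonneg
  have hw0 : w 0 = 0 := by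
    rw [hwdef]
    simp only
    rw [Set.Icc_self, eVariationOn.subsingleton γ Set.subsingleton_singleton]
    rfl
  have hw1 : w 1 = L := by
    rw [hwdef, hL]
    simp only
    rw [show Set.Icc (0:I) 1 = Set.univ from Icc_zero_one_eq_univ]
  have hwnonneg : ∀ t : I, 0 ≤ w t := fun t => ENNReal.toReal_nonneg
  set wt : ℝ → ℝ := fun r => w (Set.projIcc 0 1 zero_le_one r) with hwt
  have hwtcont : Continuous wt := hwcont.comp continuous_projIcc
  have hwtof : ∀ t : I, wt (t:ℝ) = w t := fun t => by
    rw [hwt]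
    simp only
    congr 1
    exact Set.projIcc_val zero_le_one t
  set S : ℕ → Set ℝ := fun i => {r | r ∈ Set.Icc (0:ℝ) 1 ∧ (i:ℝ) * (L / n) ≤ wt r} with hS
  have hSclosed : ∀ i, IsClosed (S i) := by
    intro i
    have : S i = Set.Icc (0:ℝ) 1 ∩ wt ⁻¹' (Set.Ici ((i:ℝ) * (L / n))) := by
      ext r; simp [hS, Set.mem_setOf_eq, and_comm]
    rw [this]
    exact isClosed_Icc.inter (isClosed_Ici.preimage hwtcont)
  have hone : ∀ i : ℕ, i ≤ n → (1:ℝ) ∈ S i := by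
    intro i hi
    refine ⟨⟨zero_le_one, le_rfl⟩, ?_⟩
    have : wt (1:ℝ) = L := by
      have := hwtof 1
      simpa [hw1] using this
    rw [this]
    calc (i:ℝ) * (L / n) ≤ (n:ℝ) * (L / n) := by
          apply mul_le_mul_of_nonneg_right _ (by positivity)
          exact_mod_cast hi
      _ = L := by field_simp
  have hbdd : ∀ i, BddBelow (S i) := fun i => ⟨0, fun r hr => hr.1.1⟩
  set r : ℕ → ℝ := fun i => sInf (S i) with hr
  have hmem : ∀ i : ℕ, i ≤ n → r i ∈ S i := fun i hi =>
    (hSclosed i).csInf_mem ⟨1, hone i hi⟩ (hbdd i)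
  have hval : ∀ i : ℕ, i ≤ n → wt (r i) ≤ (i:ℝ) * (L / n) := by
    intro i hi
    by_contra hgt
    push_neg at hgt
    have hri0 : 0 < r i := by
      rcases eq_or_lt_of_le (hmem i hi).1.1 with h | h
      · exfalso
        have : wt (0:ℝ) = 0 := by
          have := hwtof 0
          simpa [hw0] using this
        rw [← h, this] at hgt
        have : (0:ℝ) ≤ (i:ℝ) * (L / n) := by positivity
        linarith
      · exact h
    have hopen : IsOpen (wt ⁻¹' Set.Ioi ((i:ℝ) * (L / n))) := isOpen_Ioi.preimage hwtcont
    obtain ⟨δ', hδ', hball⟩ := Metric.isOpen_iff.mp hopen (r i) hgt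
    set r' : ℝ := max (r i - δ'/2) 0 with hr'
    have hr'lt : r' < r i := by
      rw [hr']
      apply max_lt _ hri0
      linarith
    have hr'mem : r' ∈ S i := by
      constructor
      · constructor
        · exact le_max_right _ _
        · exact le_trans hr'lt.le (hmem i hi).1.2
      · have : r' ∈ Metric.ball (r i) δ' := by
          rw [Metric.mem_ball, Real.dist_eq, abs_lt]
          constructor
          · linarith [le_max_left (r i - δ'/2) 0]
          · linarith
        exact (hball this).le
    exact absurd (csInf_le (hbdd i) hr'mem) (not_le.mpr hr'lt)
  have hrmono : ∀ i j : ℕ, i ≤ j → j ≤ n → r i ≤ r j := by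
    intro i j hij hj
    apply csInf_le_csInf (hbdd i) ⟨1, hone j hj⟩
    intro x hx
    exact ⟨hx.1, le_trans (by
      apply mul_le_mul_of_nonneg_right _ (by positivity)
      exact_mod_cast hij) hx.2⟩
  set t : ℕ → I := fun i => if h : n ≤ i then 1 else ⟨r i, (hmem i (by omega)).1⟩ with ht
  have htn : t n = 1 := by rw [ht]; simp
  have ht0 : t 0 = 0 := by
    rw [ht]
    simp only
    rw [dif_neg (by omega : ¬ n ≤ 0)]
    apply Subtype.ext
    show r 0 = ((0:I):ℝ)
    have h1 : r 0 ≤ 0 := csInf_le (hbdd 0) ⟨⟨le_rfl, zero_le_one⟩, by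
      simp only [Nat.cast_zero, zero_mul]
      have : wt (0:ℝ) = 0 := by
        have := hwtof 0
        simpa [hw0] using this
      rw [this]⟩
    have h2 : 0 ≤ r 0 := (hmem 0 (by omega)).1.1
    simp only [Set.Icc.coe_zero]
    linarith
  have htmono : Monotone t := by
    intro i j hij
    rw [ht]
    simp only
    split_ifs with h1 h2 h2
    · exact le_rfl
    · omega
    · exact I_le_one _
    · exact Subtype.coe_le_coe.mp (hrmono i j hij (by omega))
  have htw : ∀ i : ℕ, i ≤ n → w (t i) = (i:ℝ) * (L / n) := by
    intro i hi
    rcases eq_or_lt_of_le hi with h | h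
    · subst h
      rw [htn, hw1]
      field_simp
    · rw [ht]
      simp only
      rw [dif_neg (not_le.mpr h)]
      have := hwtof ⟨r i, (hmem i hi).1⟩
      rw [← this]
      exact le_antisymm (hval i hi) (hmem i hi).2
  refine ⟨t, htmono, ht0, htn, ?_⟩
  intro i hi
  have hadd : eVariationOn γ (Set.Icc 0 (t i)) + eVariationOn γ (Set.Icc (t i) (t (i+1))) =
      eVariationOn γ (Set.Icc 0 (t (i+1))) := by
    have := eVariationOn.Icc_add_Icc γ (s := Set.univ) (I_zero_le (t i))
      (htmono (Nat.le_succ i)) (Set.mem_univ (t i))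
    simpa [Set.univ_inter] using this
  have htoReal : (eVariationOn γ (Set.Icc (t i) (t (i+1)))).toReal = L / n := by
    have h1 := htw i hi.le
    have h2 := htw (i+1) hi
    have := congrArg ENNReal.toReal hadd
    rw [ENNReal.toReal_add (hfinIcc _ _) (hfinIcc _ _)] at this
    have hwi : (eVariationOn γ (Set.Icc 0 (t i))).toReal = w (t i) := rfl
    have hwi1 : (eVariationOn γ (Set.Icc 0 (t (i+1)))).toReal = w (t (i+1)) := rfl
    rw [hwi, hwi1] at this
    rw [h1, h2] at this
    push_cast at this
    linarith
  have : eVariationOn γ (Set.Icc (t i) (t (i+1))) = ENNReal.ofReal (L / n) := by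
    rw [← htoReal, ENNReal.ofReal_toReal (hfinIcc _ _)]
  rw [this]
  apply ENNReal.ofReal_le_ofReal
  rw [div_le_iff₀ (by exact_mod_cast hn)]
  calc L ≤ n * δ := hδ
    _ = δ * n := mul_comm _ _

end Subdivide

/-- A maximal `2ρ`-separated finite set: it covers at radius `2ρ` and each separated set
satisfies the measure bound. -/
lemma exists_net {Z : Type*} [MetricSpace Z] [MeasurableSpace Z] [BorelSpace Z]
    (μ : Measure Z) (hμfin : μ Set.univ < ⊤) (ρ : ℝ) (hρ : 0 < ρ) (m₀ : ℝ≥0∞) (hm₀ : 0 < m₀)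
    (hm₀fin : m₀ ≠ ⊤) (hballs : ∀ x : Z, m₀ ≤ μ (closedBall x ρ)) :
    ∃ A : Finset Z, (∀ x : Z, ∃ a ∈ A, dist x a ≤ 2*ρ) ∧
      (A.card : ℝ≥0∞) * m₀ ≤ μ Set.univ := by
  classical
  set sep : Finset Z → Prop := fun A => ∀ a ∈ A, ∀ b ∈ A, a ≠ b → 2*ρ < dist a b with hsep
  have hcard : ∀ A : Finset Z, sep A → (A.card : ℝ≥0∞) * m₀ ≤ μ Set.univ := by
    intro A hA
    have hdisj : (A : Set Z).PairwiseDisjoint (fun a => closedBall a ρ) := by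
      intro a ha b hb hab
      exact Metric.closedBall_disjoint_closedBall (by
        have := hA a ha b hb hab
        linarith)
    have hmeas : ∀ a ∈ A, MeasurableSet (closedBall a ρ) := fun a _ =>
      measurableSet_closedBall
    have hunion := measure_biUnion_finset hdisj hmeas (μ := μ)
    calc (A.card : ℝ≥0∞) * m₀ = ∑ _a ∈ A, m₀ := by rw [Finset.sum_const, nsmul_eq_mul]
      _ ≤ ∑ a ∈ A, μ (closedBall a ρ) := Finset.sum_le_sum (fun a _ => hballs a)
      _ = μ (⋃ a ∈ A, closedBall a ρ) := hunion.symm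
      _ ≤ μ Set.univ := measure_mono (Set.subset_univ _)
  -- bound on cardinalities
  set NB : ℕ := ⌊(μ Set.univ / m₀).toReal⌋₊ with hNB
  have hbound : ∀ A : Finset Z, sep A → A.card ≤ NB := by
    intro A hA
    have h1 : (A.card : ℝ≥0∞) ≤ μ Set.univ / m₀ :=
      ENNReal.le_div_iff_mul_le (Or.inl hm₀.ne') (Or.inl hm₀fin) |>.mpr (hcard A hA)
    have h2 : (μ Set.univ / m₀) ≠ ⊤ :=
      (ENNReal.div_lt_top hμfin.ne hm₀.ne').ne
    apply Nat.le_floor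
    have := ENNReal.toReal_mono h2 h1
    simpa using this
  set C : Set ℕ := {k | ∃ A : Finset Z, sep A ∧ A.card = k} with hC
  have hCne : C.Nonempty := ⟨0, ∅, by simp [hsep], rfl⟩
  have hCbdd : BddAbove C := by
    refine ⟨NB, fun k hk => ?_⟩
    obtain ⟨A, hA, rfl⟩ := hk
    exact hbound A hA
  obtain ⟨A, hA, hAcard⟩ := Nat.sSup_mem hCne hCbdd
  refine ⟨A, ?_, hcard A hA⟩
  intro x
  by_contra hx
  push_neg at hx
  have hxA : x ∉ A := fun h => absurd (hx x h) (by linarith [dist_self x])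
  have hsep' : sep (insert x A) := by
    intro a ha b hb hab
    rcases Finset.mem_insert.mp ha with rfl | ha' <;>
      rcases Finset.mem_insert.mp hb with h | hb'
    · exact absurd h.symm hab
    · exact lt_of_not_ge (fun hle => absurd hle (not_le.mpr (hx b hb')))
    · rw [dist_comm]
      rcases h with rfl
      exact lt_of_not_ge (fun hle => absurd hle (not_le.mpr (hx a ha')))
    · exact hA a ha' b hb' hab
  have : (insert x A).card ∈ C := ⟨insert x A, hsep', rfl⟩
  have hle := le_csSup hCbdd this
  rw [Finset.card_insert_of_notMem hxA, hAcard] at hle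
  omega

/-- The polygonal word through the markers `m j, m (j+1), ..., m (j+k)`, then back to `x₀`. -/
noncomputable def polyChain {Y : Type*} [TopologicalSpace Y] (E : ∀ a b : Y, Path a b)
    (x₀ : Y) (m : ℕ → Y) :
    (k j : ℕ) → Path (m j) x₀
  | 0, j => E (m j) x₀
  | (k+1), j => (E (m j) (m (j+1))).trans (polyChain E x₀ m k (j+1))

/-- Marker function built from a finite vector, with basepoint at index `0`. -/
abbrev mOf {Y : Type*} (x₀ : Y) (k : ℕ) (v : Fin k → Y) : ℕ → Y := fun i =>
  Nat.casesOn i x₀ (fun i' => if h : i' < k then v ⟨i', h⟩ else x₀)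

end ECE


open ECE in
theorem entropy_counting_estimate_extremal_surface
    {X : Type*} [MetricSpace X] [CompactSpace X]
    [MeasurableSpace X] [BorelSpace X]
    (hgeo : IsGeodesicSpace X) (x₀ : X) (μ : Measure X)
    (hμpos : 0 < μ Set.univ) (hμfin : μ Set.univ < ⊤)
    (s : ℝ) (hs : 0 < s)
    (hsys : ∀ (x : X) (γ : Path x x), pathLength γ < ENNReal.ofReal s →
      γ.Homotopic (Path.refl x))
    (hball : ∀ (x : X) (r : ℝ), 0 < r → r ≤ s / 2 →
      ENNReal.ofReal (2 * r ^ 2) ≤ μ (closedBall x r))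
    (α β : ℝ) (hα : 0 < α) (hβ : 0 < β) (hαβ : 4 * α + β < 1 / 2)
    (T : ℝ) (hT : 0 < T) :
    {g : FundamentalGroup X x₀ | ∃ γ : Path x₀ x₀,
        FundamentalGroup.fromLoop ⟦γ⟧ = g ∧ pathLength γ ≤ ENNReal.ofReal T}.Finite ∧
    ({g : FundamentalGroup X x₀ | ∃ γ : Path x₀ x₀,
        FundamentalGroup.fromLoop ⟦γ⟧ = g ∧ pathLength γ ≤ ENNReal.ofReal T}.ncard : ℝ) ≤
      ((μ Set.univ).toReal / (2 * α ^ 2 * s ^ 2)) ^ ⌊T / (β * s)⌋₊ := by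
  classical
  have hα8 : α < 1/8 := by linarith
  have hαs : 0 < α * s := by positivity
  have hβs : 0 < β * s := by positivity
  -- chosen geodesics
  choose E hE using hgeo
  -- a helper: short pairs of paths with the same endpoints are homotopic
  have short : ∀ {a b : X} (p q : Path a b),
      pathLength p + pathLength q < ENNReal.ofReal s → p.Homotopic q := by
    intro a b p q hlen
    apply homotopic_of_trans_symm
    apply hsys
    calc pathLength (p.trans q.symm) ≤ pathLength p + pathLength q.symm :=
          pathLength_trans_le _ _
      _ ≤ pathLength p + pathLength q := add_le_add_right (pathLength_symm_le q) _
      _ < ENNReal.ofReal s := hlen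
  -- the net
  have hballs : ∀ x : X, ENNReal.ofReal (2*(α*s)^2) ≤ μ (closedBall x (α*s)) := by
    intro x
    exact hball x (α*s) (by positivity) (by nlinarith)
  obtain ⟨A, hAcov, hAcard⟩ := exists_net μ hμfin (α*s) hαs (ENNReal.ofReal (2*(α*s)^2))
    (ENNReal.ofReal_pos.mpr (by positivity)) ENNReal.ofReal_ne_top hballs
  choose av hav1 hav2 using hAcov
  -- subdivision size
  set n : ℕ := ⌈T / (β*s)⌉₊ with hndef
  have hn0 : 0 < n := Nat.ceil_pos.mpr (by positivity)
  have hsucc : n - 1 + 1 = n := Nat.succ_pred_eq_of_pos hn0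
  -- the word map
  set g' : (Fin (n-1) → {a : X // a ∈ A}) → FundamentalGroup X x₀ := fun v =>
    FundamentalGroup.fromLoop
      ⟦polyChain E x₀ (mOf x₀ (n-1) (fun i => ((v i : X)))) (n-1) 0⟧ with hg'
  set S := {g : FundamentalGroup X x₀ | ∃ γ : Path x₀ x₀,
      FundamentalGroup.fromLoop ⟦γ⟧ = g ∧ pathLength γ ≤ ENNReal.ofReal T} with hSdef
  have hsub : S ⊆ Set.range g' := by
    rintro g₀ ⟨γ, hγq, hγlen⟩
    have hfin : eVariationOn (⇑γ) Set.univ ≠ ⊤ :=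
      fun h => by rw [pathLength, h] at hγlen; exact (not_le.mpr (ENNReal.ofReal_lt_top)) hγlen
    have hLT : (eVariationOn (⇑γ) Set.univ).toReal ≤ T :=
      ENNReal.toReal_le_of_le_ofReal hT.le hγlen
    have hTn : T ≤ n * (β*s) := by
      have := Nat.le_ceil (T / (β*s))
      rw [← hndef] at this
      calc T = (T / (β*s)) * (β*s) := by field_simp
        _ ≤ n * (β*s) := by
            apply mul_le_mul_of_nonneg_right this hβs.le
    obtain ⟨t, htm, ht0, htn, hpieces⟩ := exists_subdivision (⇑γ) γ.continuous hfin n hn0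
      (β*s) (le_trans hLT hTn)
    have hγt0 : γ (t 0) = x₀ := by rw [ht0]; exact γ.source
    have hγtn : γ (t n) = x₀ := by rw [htn]; exact γ.target
    have hx₀tn : x₀ = γ (t n) := hγtn.symm
    have hx₀t0 : x₀ = γ (t 0) := hγt0.symm
    -- markers
    set v : Fin (n-1) → {a : X // a ∈ A} :=
      fun i => ⟨av (γ (t ((i : ℕ)+1))), hav1 _⟩ with hv
    set m : ℕ → X := mOf x₀ (n-1) (fun i => ((v i : X))) with hm
    have hm0 : m 0 = x₀ := rfl
    have hdist : ∀ j, j ≤ n-1 → dist (γ (t j)) (m j) ≤ 2*(α*s) := by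
      intro j hj
      cases j with
      | zero =>
        rw [hm0, hγt0]
        simp only [dist_self]
        positivity
      | succ j' =>
        have hj' : j' < n - 1 := by omega
        have : m (j'+1) = av (γ (t (j'+1))) := by
          show (if h : j' < n-1 then ((v ⟨j', h⟩ : X)) else x₀) = _
          rw [dif_pos hj', hv]
        rw [this]
        exact hav2 _
    have hdp : ∀ j, j < n → dist (γ (t j)) (γ (t (j+1))) ≤ β*s := by
      intro j hj
      have h1 : edist (γ (t j)) (γ (t (j+1))) ≤ eVariationOn (⇑γ) (Set.Icc (t j) (t (j+1))) :=
        eVariationOn.edist_le (⇑γ) ⟨le_rfl, htm (Nat.le_succ j)⟩ ⟨htm (Nat.le_succ j), le_rfl⟩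
      have h2 := le_trans h1 (hpieces j hj)
      rw [edist_dist] at h2
      exact (ENNReal.ofReal_le_ofReal_iff hβs.le).mp h2
    have hsublen : ∀ j, j < n → pathLength (subPath γ (t j) (t (j+1))) ≤ ENNReal.ofReal (β*s) :=
      fun j hj => le_trans (subPath_length_le γ (htm (Nat.le_succ j))) (hpieces j hj)
    -- the key decomposition
    have key : ∀ k j, j + k = n - 1 →
        ((subPath γ (t j) (t n)).cast rfl hx₀tn).Homotopic
          ((E (γ (t j)) (m j)).trans (polyChain E x₀ m k j)) := by
      intro k
      induction k with
      | zero =>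
        intro j hj
        have hjeq : j = n - 1 := by omega
        subst hjeq
        have hPC : polyChain E x₀ m 0 (n-1) = E (m (n-1)) x₀ := rfl
        apply short
        have h1 : pathLength ((subPath γ (t (n-1)) (t n)).cast rfl hx₀tn)
            ≤ ENNReal.ofReal (β*s) := by
          rw [pathLength_cast]
          have := hsublen (n-1) (by omega)
          rwa [hsucc] at this
        have h2 : pathLength (E (γ (t (n-1))) (m (n-1))) ≤ ENNReal.ofReal (2*(α*s)) := by
          rw [hE]
          exact ENNReal.ofReal_le_ofReal (hdist (n-1) le_rfl)
        have hd3 : dist (m (n-1)) x₀ ≤ 2*(α*s) + β*s := by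
          have h4 := dist_triangle4 (m (n-1)) (γ (t (n-1))) (γ (t n)) x₀
          have h5 : dist (γ (t n)) x₀ = 0 := by rw [hγtn, dist_self]
          have h6 : dist (m (n-1)) (γ (t (n-1))) ≤ 2*(α*s) := by
            rw [dist_comm]; exact hdist (n-1) le_rfl
          have h7 : dist (γ (t (n-1))) (γ (t n)) ≤ β*s := by
            have := hdp (n-1) (by omega)
            rwa [hsucc] at this
          linarith
        have h3 : pathLength (E (m (n-1)) x₀) ≤ ENNReal.ofReal (2*(α*s) + β*s) := by
          rw [hE]
          exact ENNReal.ofReal_le_ofReal hd3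
        calc pathLength ((subPath γ (t (n-1)) (t n)).cast rfl hx₀tn)
              + pathLength ((E (γ (t (n-1))) (m (n-1))).trans (polyChain E x₀ m 0 (n-1)))
            ≤ ENNReal.ofReal (β*s) +
              (ENNReal.ofReal (2*(α*s)) + ENNReal.ofReal (2*(α*s) + β*s)) := by
              apply add_le_add h1
              rw [hPC]
              exact le_trans (pathLength_trans_le _ _) (add_le_add h2 h3)
          _ = ENNReal.ofReal ((β*s) + ((2*(α*s)) + (2*(α*s) + β*s))) := by
              rw [← ENNReal.ofReal_add (by positivity) (by positivity),
                ← ENNReal.ofReal_add (by positivity) (by positivity)]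
          _ < ENNReal.ofReal s := by
              rw [ENNReal.ofReal_lt_ofReal_iff hs]
              nlinarith
      | succ k ih =>
        intro j hj
        have hjn1 : j + 1 ≤ n - 1 := by omega
        have hjn : j ≤ n - 1 := by omega
        have hjltn : j < n := by omega
        have hc1 : ((subPath γ (t j) (t n)).cast rfl hx₀tn).Homotopic
            ((subPath γ (t j) (t (j+1))).trans
              ((subPath γ (t (j+1)) (t n)).cast rfl hx₀tn)) := by
          have hsp := (subPath_trans_homotopic γ (htm (Nat.le_succ j))
            (htm (show j+1 ≤ n by omega))).symm
          have := homotopic_cast hsp rfl hx₀tn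
          rwa [trans_cast_right] at this
        have c2 := ih (j+1) (by omega)
        have c3 := Path.Homotopic.hcomp
          (Path.Homotopic.refl (subPath γ (t j) (t (j+1)))) c2
        have c4 : ((subPath γ (t j) (t (j+1))).trans
              ((E (γ (t (j+1))) (m (j+1))).trans (polyChain E x₀ m k (j+1)))).Homotopic
            (((subPath γ (t j) (t (j+1))).trans
              (E (γ (t (j+1))) (m (j+1)))).trans (polyChain E x₀ m k (j+1))) :=
          Path.Homotopic.symm ⟨Path.Homotopy.transAssoc _ _ _⟩
        have c5 : ((subPath γ (t j) (t (j+1))).trans (E (γ (t (j+1))) (m (j+1)))).Homotopic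
            ((E (γ (t j)) (m j)).trans (E (m j) (m (j+1)))) := by
          apply short
          have h1 := hsublen j hjltn
          have h2 : pathLength (E (γ (t (j+1))) (m (j+1))) ≤ ENNReal.ofReal (2*(α*s)) := by
            rw [hE]
            exact ENNReal.ofReal_le_ofReal (hdist (j+1) hjn1)
          have h3 : pathLength (E (γ (t j)) (m j)) ≤ ENNReal.ofReal (2*(α*s)) := by
            rw [hE]
            exact ENNReal.ofReal_le_ofReal (hdist j hjn)
          have hd4 : dist (m j) (m (j+1)) ≤ 2*(α*s) + (β*s) + 2*(α*s) := by
            have h4 := dist_triangle4 (m j) (γ (t j)) (γ (t (j+1))) (m (j+1))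
            have h5 : dist (m j) (γ (t j)) ≤ 2*(α*s) := by
              rw [dist_comm]; exact hdist j hjn
            have h6 := hdp j hjltn
            have h7 := hdist (j+1) hjn1
            linarith
          have h4 : pathLength (E (m j) (m (j+1)))
              ≤ ENNReal.ofReal (2*(α*s) + (β*s) + 2*(α*s)) := by
            rw [hE]
            exact ENNReal.ofReal_le_ofReal hd4
          calc pathLength ((subPath γ (t j) (t (j+1))).trans (E (γ (t (j+1))) (m (j+1))))
                + pathLength ((E (γ (t j)) (m j)).trans (E (m j) (m (j+1))))
              ≤ (ENNReal.ofReal (β*s) + ENNReal.ofReal (2*(α*s)))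
                + (ENNReal.ofReal (2*(α*s))
                  + ENNReal.ofReal (2*(α*s) + (β*s) + 2*(α*s))) := by
                apply add_le_add
                · exact le_trans (pathLength_trans_le _ _) (add_le_add h1 h2)
                · exact le_trans (pathLength_trans_le _ _) (add_le_add h3 h4)
            _ = ENNReal.ofReal (((β*s) + 2*(α*s)) + ((2*(α*s)) + (2*(α*s) + (β*s) + 2*(α*s)))) := by
                rw [← ENNReal.ofReal_add (by positivity) (by positivity),
                  ← ENNReal.ofReal_add (by positivity) (by positivity),
                  ← ENNReal.ofReal_add (by positivity) (by positivity)]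
            _ < ENNReal.ofReal s := by
                rw [ENNReal.ofReal_lt_ofReal_iff hs]
                nlinarith
        have c6 := Path.Homotopic.hcomp c5 (Path.Homotopic.refl (polyChain E x₀ m k (j+1)))
        have c7 : (((E (γ (t j)) (m j)).trans (E (m j) (m (j+1)))).trans
              (polyChain E x₀ m k (j+1))).Homotopic
            ((E (γ (t j)) (m j)).trans (polyChain E x₀ m (k+1) j)) := by
          have hPCk : polyChain E x₀ m (k+1) j
              = (E (m j) (m (j+1))).trans (polyChain E x₀ m k (j+1)) := rfl
          rw [hPCk]
          exact ⟨Path.Homotopy.transAssoc _ _ _⟩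
        exact (((hc1.trans c3).trans c4).trans c6).trans c7
    -- conclude: γ is homotopic to the word
    have key0 := key (n-1) 0 (by omega)
    have hcast := homotopic_cast key0 hx₀t0 rfl
    rw [trans_cast_left] at hcast
    have hγeq : γ = ((subPath γ (t 0) (t n)).cast rfl hx₀tn).cast hx₀t0 rfl := by
      ext u
      show γ u = γ (affineI (t 0) (t n) u)
      refine congrArg γ (Subtype.ext ?_).symm
      have e0 : ((t 0 : I) : ℝ) = 0 := by rw [ht0]; rfl
      have e1 : ((t n : I) : ℝ) = 1 := by rw [htn]; rfl
      show ((t 0 : I) : ℝ) + (u:ℝ) * ((t n : I) - (t 0 : I)) = (u:ℝ)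
      rw [e0, e1]
      ring
    have hpre : ((E (γ (t 0)) (m 0)).cast hx₀t0 rfl).Homotopic (Path.refl x₀) := by
      apply short
      have h1 : pathLength ((E (γ (t 0)) (m 0)).cast hx₀t0 rfl) = 0 := by
        rw [pathLength_cast, hE, hm0, hγt0]
        simp
      have h2 : pathLength (Path.refl x₀) = 0 := by
        apply eVariationOn.constant_on
        intro p hp q hq
        rcases hp with ⟨u, _, rfl⟩
        rcases hq with ⟨w, _, rfl⟩
        rfl
      rw [h1, h2, add_zero]
      exact ENNReal.ofReal_pos.mpr hs
    have hfinal : γ.Homotopic (polyChain E x₀ m (n-1) 0) := by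
      rw [← hγeq] at hcast
      have step1 : γ.Homotopic (((E (γ (t 0)) (m 0)).cast hx₀t0 rfl).trans
          (polyChain E x₀ m (n-1) 0)) := hcast
      have step2 := Path.Homotopic.hcomp hpre
        (Path.Homotopic.refl (polyChain E x₀ m (n-1) 0))
      have step3 : ((Path.refl x₀).trans (polyChain E x₀ m (n-1) 0)).Homotopic
          (polyChain E x₀ m (n-1) 0) := ⟨Path.Homotopy.reflTrans _⟩
      exact (step1.trans step2).trans step3
    refine ⟨v, ?_⟩
    rw [hg']
    show FundamentalGroup.fromLoop ⟦polyChain E x₀ m (n-1) 0⟧ = g₀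
    rw [← hγq]
    congr 1
    exact (Quotient.sound hfinal).symm
  -- finiteness
  have hfinS : S.Finite := (Set.finite_range g').subset hsub
  refine ⟨hfinS, ?_⟩
  -- cardinality estimate
  have hcard1 : S.ncard ≤ A.card ^ (n-1) := by
    calc S.ncard ≤ (Set.range g').ncard := Set.ncard_le_ncard hsub (Set.finite_range g')
      _ = (g' '' Set.univ).ncard := by rw [Set.image_univ]
      _ ≤ (Set.univ : Set (Fin (n-1) → {a : X // a ∈ A})).ncard :=
          Set.ncard_image_le Set.finite_univ
      _ = Nat.card (Fin (n-1) → {a : X // a ∈ A}) := Set.ncard_univ _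
      _ = A.card ^ (n-1) := by
          rw [Nat.card_eq_fintype_card, Fintype.card_fun]
          congr 1
          · exact Fintype.card_coe A
          · exact Fintype.card_fin _
  set N₀ : ℝ := (μ Set.univ).toReal / (2 * α ^ 2 * s ^ 2) with hN₀
  have hdenom : (0:ℝ) < 2 * α ^ 2 * s ^ 2 := by positivity
  have hAle : (A.card : ℝ) ≤ N₀ := by
    have h1 : (A.card : ℝ) * (2*(α*s)^2) ≤ (μ Set.univ).toReal := by
      have := ENNReal.toReal_mono hμfin.ne hAcard
      rwa [ENNReal.toReal_mul, ENNReal.toReal_natCast,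
        ENNReal.toReal_ofReal (by positivity)] at this
    rw [hN₀, le_div_iff₀ hdenom]
    calc (A.card : ℝ) * (2 * α ^ 2 * s ^ 2) = (A.card : ℝ) * (2*(α*s)^2) := by ring
      _ ≤ (μ Set.univ).toReal := h1
  have hN1 : 1 ≤ N₀ := by
    have h1 : ENNReal.ofReal (2 * (s/2) ^ 2) ≤ μ Set.univ :=
      le_trans (hball x₀ (s/2) (by positivity) le_rfl) (measure_mono (Set.subset_univ _))
    have h2 : 2 * (s/2) ^ 2 ≤ (μ Set.univ).toReal := by
      have := ENNReal.toReal_mono hμfin.ne h1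
      rwa [ENNReal.toReal_ofReal (by positivity)] at this
    rw [hN₀, le_div_iff₀ hdenom]
    have hα2 : α^2 ≤ 1/64 := by nlinarith
    nlinarith [sq_nonneg s]
  have hexp : n - 1 ≤ ⌊T / (β*s)⌋₊ := by
    have := Nat.ceil_le_floor_add_one (T / (β*s))
    omega
  calc (S.ncard : ℝ) ≤ ((A.card ^ (n-1) : ℕ) : ℝ) := by exact_mod_cast hcard1
    _ = (A.card : ℝ) ^ (n-1) := by push_cast; ring
    _ ≤ N₀ ^ (n-1) := pow_le_pow_left₀ (by positivity) hAle _
    _ ≤ N₀ ^ ⌊T / (β*s)⌋₊ := pow_le_pow_right₀ hN1 hexp
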